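/- Let (X,d,W) be a UCW-hyperbolic space with monotone modulus of uniform convexity η, C ⊆ X a nonempty convex subset, T : C → C nonexpansive with a fixed point, (λ_n),(s_n) sequences in [0,1], (x_n) the Ishikawa iteration starting with x ∈ C, and y_n := (1−s_n)x_n ⊕ s_n T x_n. Suppose θ : ℕ → ℕ is a rate of divergence for Σ_{n=0}^∞ λ_n(1−λ_n), and b > 0 satisfies b ≥ d(x,p) for some fixed point p of T. Then for all ε > 0 and k ∈ ℕ there exists N ∈ ℕ with k ≤ N ≤ h(ε,k,η,b,θ) and d(x_N, Ty_N) < ε, where h(ε,k,η,b,θ) := θ(⌈(b+1)/(ε·η(b, ε/b))⌉ + k) if ε ≤ 2b, and h(ε,k,η,b,θ) := k otherwise. In particular liminf_{n→∞} d(x_n, Ty_n) = 0. -/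
import Mathlib


open Set Filter Metric Bornology Function

/-- A `W`-hyperbolic space structure on a metric space `X` (Kohlenbach).
`W x y l` denotes `(1-l)x ⊕ l y`. -/
structure WHyp (X : Type*) [MetricSpace X] where
  W : X → X → ℝ → X
  W1 : ∀ (x y z : X), ∀ l ∈ Set.Icc (0:ℝ) 1,
    dist z (W x y l) ≤ (1 - l) * dist z x + l * dist z y
  W2 : ∀ (x y : X), ∀ l ∈ Set.Icc (0:ℝ) 1, ∀ l' ∈ Set.Icc (0:ℝ) 1,
    dist (W x y l) (W x y l') = |l - l'| * dist x y
  W3 : ∀ (x y : X), ∀ l ∈ Set.Icc (0:ℝ) 1, W x y l = W y x (1 - l)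
  W4 : ∀ (x y z w : X), ∀ l ∈ Set.Icc (0:ℝ) 1,
    dist (W x z l) (W y w l) ≤ (1 - l) * dist x y + l * dist z w

/-- `η` is a modulus of uniform convexity for the `W`-hyperbolic space `H`. -/
def WHyp.UnifConvex {X : Type*} [MetricSpace X] (H : WHyp X) (η : ℝ → ℝ → ℝ) : Prop :=
  (∀ r ε : ℝ, 0 < r → ε ∈ Set.Ioc (0:ℝ) 2 → η r ε ∈ Set.Ioc (0:ℝ) 1) ∧
  (∀ (r ε : ℝ) (a x y : X), 0 < r → ε ∈ Set.Ioc (0:ℝ) 2 →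
    dist x a ≤ r → dist y a ≤ r → ε * r ≤ dist x y →
    dist (H.W x y (1/2)) a ≤ (1 - η r ε) * r)

/-- A modulus of uniform convexity is monotone if it decreases in `r` for fixed `ε`. -/
def MonotoneModulus (η : ℝ → ℝ → ℝ) : Prop :=
  ∀ r s ε : ℝ, 0 < r → r ≤ s → ε ∈ Set.Ioc (0:ℝ) 2 → η s ε ≤ η r ε

/-- A subset `C` is convex in the `W`-hyperbolic space `H`. -/
def WHyp.ConvexSet {X : Type*} [MetricSpace X] (H : WHyp X) (C : Set X) : Prop :=
  ∀ x ∈ C, ∀ y ∈ C, ∀ l ∈ Set.Icc (0:ℝ) 1, H.W x y l ∈ C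

/-- The Ishikawa iteration: `x₀ = x`,
`x_{n+1} = (1-λ_n)x_n ⊕ λ_n T((1-s_n)x_n ⊕ s_n T x_n)`. -/
def WHyp.ishSeq {X : Type*} [MetricSpace X] (H : WHyp X) (T : X → X) (l s : ℕ → ℝ)
    (x : X) : ℕ → X
  | 0 => x
  | n + 1 =>
      H.W (H.ishSeq T l s x n)
        (T (H.W (H.ishSeq T l s x n) (T (H.ishSeq T l s x n)) (s n))) (l n)

/-- The bound `h(ε,k,η,b,θ)` from Proposition 4.4 of the paper. -/
noncomputable def hRate (η : ℝ → ℝ → ℝ) (b : ℝ) (θ : ℕ → ℕ) (ε : ℝ) (k : ℕ) : ℕ :=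
  if ε ≤ 2 * b then θ (⌈(b + 1) / (ε * η b (ε / b))⌉₊ + k) else k

lemma wZero {X : Type*} [MetricSpace X] (H : WHyp X) (x y : X) : H.W x y 0 = x := by
  have h := H.W1 x y x 0 ⟨le_refl 0, zero_le_one⟩
  simp only [dist_self, sub_zero, one_mul, zero_mul, mul_zero, add_zero] at h
  exact (dist_le_zero.mp h).symm

lemma wOne {X : Type*} [MetricSpace X] (H : WHyp X) (x y : X) : H.W x y 1 = y := by
  have h := H.W1 x y y 1 ⟨zero_le_one, le_refl 1⟩
  simp only [dist_self, sub_self, zero_mul, one_mul, mul_zero, zero_add] at h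
  exact (dist_le_zero.mp h).symm

lemma distW_left {X : Type*} [MetricSpace X] (H : WHyp X) (x y : X) {l : ℝ}
    (hl : l ∈ Set.Icc (0:ℝ) 1) : dist x (H.W x y l) = l * dist x y := by
  have h := H.W2 x y l hl 0 ⟨le_refl 0, zero_le_one⟩
  rw [wZero H x y, sub_zero, abs_of_nonneg hl.1] at h
  rw [dist_comm, h]

lemma nest {X : Type*} [MetricSpace X] (H : WHyp X) {η : ℝ → ℝ → ℝ}
    (hU : H.UnifConvex η) (x y : X) {l : ℝ} (h0 : 0 ≤ l) (h2 : l ≤ 1/2) :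
    H.W x y l = H.W x (H.W x y (1/2)) (2*l) := by
  have hlI : l ∈ Set.Icc (0:ℝ) 1 := ⟨h0, by linarith⟩
  have hhI : (1/2 : ℝ) ∈ Set.Icc (0:ℝ) 1 := by norm_num
  have h2lI : 2*l ∈ Set.Icc (0:ℝ) 1 := ⟨by linarith, by linarith⟩
  have hxz : dist x (H.W x y l) = l * dist x y := distW_left H x y hlI
  have hxm : dist x (H.W x y (1/2)) = (1/2) * dist x y := distW_left H x y hhI
  have hxu : dist x (H.W x (H.W x y (1/2)) (2*l)) = l * dist x y := by
    have h := distW_left H x (H.W x y (1/2)) h2lI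
    rw [h, hxm]; ring
  have hzm : dist (H.W x y l) (H.W x y (1/2)) = (1/2 - l) * dist x y := by
    have h := H.W2 x y l hlI (1/2) hhI
    rw [abs_of_nonpos (by linarith), neg_sub] at h
    exact h
  have hum : dist (H.W x (H.W x y (1/2)) (2*l)) (H.W x y (1/2)) = (1/2 - l) * dist x y := by
    have h := H.W2 x (H.W x y (1/2)) (2*l) h2lI 1 ⟨zero_le_one, le_refl 1⟩
    rw [wOne, abs_of_nonpos (by linarith), neg_sub, hxm] at h
    rw [h]; ring
  rcases eq_or_ne (l * dist x y) 0 with hld | hld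
  · have e1 : x = H.W x y l := dist_eq_zero.mp (by rw [hxz, hld])
    have e2 : x = H.W x (H.W x y (1/2)) (2*l) := dist_eq_zero.mp (by rw [hxu, hld])
    exact e1.symm.trans e2
  · have hdpos : 0 < l * dist x y :=
      lt_of_le_of_ne (mul_nonneg h0 dist_nonneg) (Ne.symm hld)
    by_contra hne
    set z := H.W x y l
    set u := H.W x (H.W x y (1/2)) (2*l)
    set m := H.W x y (1/2)
    have hδ : 0 < dist z u := dist_pos.mpr hne
    have htri : dist z u ≤ dist z x + dist x u := dist_triangle z x u
    have hzx : dist z x = l * dist x y := by rw [dist_comm]; exact hxz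
    have hε'I : dist z u / (l * dist x y) ∈ Set.Ioc (0:ℝ) 2 := by
      constructor
      · exact div_pos hδ hdpos
      · rw [div_le_iff₀ hdpos]; linarith [htri, hzx, hxu]
    have huc := hU.2 (l * dist x y) (dist z u / (l * dist x y)) x z u hdpos hε'I
      (le_of_eq hzx) (by rw [dist_comm]; exact le_of_eq hxu)
      (div_mul_cancel₀ (dist z u) hdpos.ne').le
    have hηpos : 0 < η (l * dist x y) (dist z u / (l * dist x y)) :=
      (hU.1 _ _ hdpos hε'I).1
    have hw1 := H.W1 z u m (1/2) hhI
    have hmz : dist m z = (1/2 - l) * dist x y := by rw [dist_comm]; exact hzm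
    have hmu : dist m u = (1/2 - l) * dist x y := by rw [dist_comm]; exact hum
    have htri2 : dist x m ≤ dist x (H.W z u (1/2)) + dist (H.W z u (1/2)) m :=
      dist_triangle x (H.W z u (1/2)) m
    have hcm : dist (H.W z u (1/2)) m = dist m (H.W z u (1/2)) := dist_comm _ _
    have hcw : dist x (H.W z u (1/2)) = dist (H.W z u (1/2)) x := dist_comm _ _
    have hmul : 0 < η (l * dist x y) (dist z u / (l * dist x y)) * (l * dist x y) :=
      mul_pos hηpos hdpos
    nlinarith [hw1, htri2, huc, hxm, hmz, hmu]

lemma genConvex {X : Type*} [MetricSpace X] (H : WHyp X) {η : ℝ → ℝ → ℝ}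
    (hU : H.UnifConvex η) {r ε : ℝ} (hr : 0 < r) (hε : ε ∈ Set.Ioc (0:ℝ) 2)
    (a x y : X) (hx : dist x a ≤ r) (hy : dist y a ≤ r) (hxy : ε * r ≤ dist x y)
    {l : ℝ} (hl : l ∈ Set.Icc (0:ℝ) 1) :
    dist (H.W x y l) a ≤ (1 - 2*l*(1-l)*η r ε) * r := by
  have hη := hU.1 r ε hr hε
  have key : ∀ x y : X, dist x a ≤ r → dist y a ≤ r → ε*r ≤ dist x y →
      ∀ l' : ℝ, 0 ≤ l' → l' ≤ 1/2 →
      dist (H.W x y l') a ≤ (1 - 2*l'*(1-l')*η r ε)*r := by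
    intro x y hx hy hxy l' h0 h2
    rw [nest H hU x y h0 h2]
    have hmid := hU.2 r ε a x y hr hε hx hy hxy
    have hw1 := H.W1 x (H.W x y (1/2)) a (2*l') ⟨by linarith, by linarith⟩
    rw [dist_comm]
    have hax : dist a x ≤ r := by rw [dist_comm]; exact hx
    have ham : dist a (H.W x y (1/2)) ≤ (1 - η r ε) * r := by
      rw [dist_comm]; exact hmid
    nlinarith [hw1, mul_le_mul_of_nonneg_left hax (by linarith : (0:ℝ) ≤ 1-2*l'),
      mul_le_mul_of_nonneg_left ham (by linarith : (0:ℝ) ≤ 2*l'),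
      mul_nonneg (mul_nonneg (mul_nonneg h0 h0) hη.1.le) hr.le]
  rcases le_or_gt l (1/2) with hc | hc
  · exact key x y hx hy hxy l hl.1 hc
  · rw [H.W3 x y l hl]
    have h := key y x hy hx (by rwa [dist_comm]) (1-l) (by linarith [hl.2]) (by linarith)
    have e : (1 - 2*(1-l)*(1-(1-l))*η r ε)*r = (1 - 2*l*(1-l)*η r ε)*r := by ring
    exact le_of_le_of_eq h e

theorem stmt16 {X : Type*} [MetricSpace X] (H : WHyp X)
    (η : ℝ → ℝ → ℝ) (hU : H.UnifConvex η) (hmon : MonotoneModulus η)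
    (C : Set X) (hCne : C.Nonempty) (hCconv : H.ConvexSet C)
    (T : X → X) (hT : Set.MapsTo T C C)
    (hTne : ∀ x ∈ C, ∀ y ∈ C, dist (T x) (T y) ≤ dist x y)
    (l s : ℕ → ℝ) (hl : ∀ n, l n ∈ Set.Icc (0:ℝ) 1) (hs : ∀ n, s n ∈ Set.Icc (0:ℝ) 1)
    (x : X) (hx : x ∈ C)
    (xs : ℕ → X) (hxs : xs = H.ishSeq T l s x)
    (ys : ℕ → X) (hys : ∀ n, ys n = H.W (xs n) (T (xs n)) (s n))
    (θ : ℕ → ℕ)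
    (hθ : ∀ n : ℕ, (n : ℝ) ≤ ∑ i ∈ Finset.range (θ n + 1), l i * (1 - l i))
    (b : ℝ) (hb : 0 < b) (hbp : ∃ p ∈ C, T p = p ∧ dist x p ≤ b) :
    (∀ ε : ℝ, 0 < ε → ∀ k : ℕ, ∃ N : ℕ, k ≤ N ∧ N ≤ hRate η b θ ε k ∧
      dist (xs N) (T (ys N)) < ε) ∧
    Filter.liminf (fun n => dist (xs n) (T (ys n))) Filter.atTop = 0 := by
  obtain ⟨p, hpC, hpfix, hpb⟩ := hbp
  have hx0 : xs 0 = x := by rw [hxs]; rfl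
  have hrec : ∀ n, xs (n+1) = H.W (xs n) (T (ys n)) (l n) := by
    intro n; rw [hys n, hxs]; rfl
  -- membership
  have hmem : ∀ n, xs n ∈ C := by
    intro n
    induction n with
    | zero => rw [hx0]; exact hx
    | succ n ih =>
      have hy : ys n ∈ C := by
        rw [hys n]; exact hCconv _ ih _ (hT ih) _ (hs n)
      rw [hrec n]; exact hCconv _ ih _ (hT hy) _ (hl n)
  have hysC : ∀ n, ys n ∈ C := by
    intro n; rw [hys n]; exact hCconv _ (hmem n) _ (hT (hmem n)) _ (hs n)
  -- dist (T (ys n)) p ≤ dist (xs n) p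
  have hTyp : ∀ n, dist (T (ys n)) p ≤ dist (xs n) p := by
    intro n
    have h1 : dist (T (ys n)) p ≤ dist (ys n) p := by
      calc dist (T (ys n)) p = dist (T (ys n)) (T p) := by rw [hpfix]
        _ ≤ dist (ys n) p := hTne _ (hysC n) _ hpC
    have h2 : dist (T (xs n)) p ≤ dist (xs n) p := by
      calc dist (T (xs n)) p = dist (T (xs n)) (T p) := by rw [hpfix]
        _ ≤ dist (xs n) p := hTne _ (hmem n) _ hpC
    have hw := H.W1 (xs n) (T (xs n)) p (s n) (hs n)
    have h3 : dist (ys n) p ≤ dist (xs n) p := by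
      rw [hys n, dist_comm]
      have hmul : s n * dist p (T (xs n)) ≤ s n * dist p (xs n) := by
        apply mul_le_mul_of_nonneg_left _ (hs n).1
        rw [dist_comm p, dist_comm p]; exact h2
      have hcc : dist p (xs n) = dist (xs n) p := dist_comm _ _
      linarith [hw, hmul, hcc]
    exact h1.trans h3
  -- one-step monotonicity and bound
  have hdec : ∀ n, dist (xs (n+1)) p ≤ dist (xs n) p := by
    intro n
    have hw := H.W1 (xs n) (T (ys n)) p (l n) (hl n)
    rw [hrec n, dist_comm]
    have hmul : l n * dist p (T (ys n)) ≤ l n * dist p (xs n) := by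
      apply mul_le_mul_of_nonneg_left _ (hl n).1
      rw [dist_comm p, dist_comm p]; exact hTyp n
    have hcc : dist p (xs n) = dist (xs n) p := dist_comm _ _
    linarith [hw, hmul, hcc]
  have hbound : ∀ n, dist (xs n) p ≤ b := by
    intro n
    induction n with
    | zero => rw [hx0]; exact hpb
    | succ n ih => exact (hdec n).trans ih
  have hub : ∀ n, dist (xs n) (T (ys n)) ≤ 2 * b := by
    intro n
    calc dist (xs n) (T (ys n)) ≤ dist (xs n) p + dist p (T (ys n)) := dist_triangle _ _ _
      _ ≤ b + b := by
          rw [dist_comm p]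
          exact add_le_add (hbound n) ((hTyp n).trans (hbound n))
      _ = 2 * b := by ring
  -- main quantitative part
  have main : ∀ ε : ℝ, 0 < ε → ∀ k : ℕ, ∃ N : ℕ, k ≤ N ∧ N ≤ hRate η b θ ε k ∧
      dist (xs N) (T (ys N)) < ε := by
    intro ε hε k
    by_cases hcase : ε ≤ 2 * b
    · -- interesting case
      have hεb : ε / b ∈ Set.Ioc (0:ℝ) 2 :=
        ⟨div_pos hε hb, by rw [div_le_iff₀ hb]; linarith⟩
      have hη₀pos : 0 < η b (ε/b) := (hU.1 b (ε/b) hb hεb).1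
      have hη₀le : η b (ε/b) ≤ 1 := (hU.1 b (ε/b) hb hεb).2
      set K := ⌈(b + 1) / (ε * η b (ε / b))⌉₊ with hKdef
      set M := θ (K + k) with hMdef
      have hrateq : hRate η b θ ε k = M := by
        rw [hRate, if_pos hcase]
      rw [hrateq]
      by_contra hcon
      push_neg at hcon
      -- hcon : ∀ N, k ≤ N → N ≤ M → ε ≤ dist (xs N) (T (ys N))
      have hstep : ∀ n, k ≤ n → n ≤ M →
          dist (xs (n+1)) p ≤ dist (xs n) p - l n * (1 - l n) * (η b (ε/b) * ε) := by
        intro n hkn hnM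
        have hge : ε ≤ dist (xs n) (T (ys n)) := hcon n hkn hnM
        have h2r : ε ≤ 2 * dist (xs n) p := by
          have := hub n
          have h := dist_triangle (xs n) p (T (ys n))
          have := hTyp n
          rw [dist_comm p] at h
          linarith
        have rpos : 0 < dist (xs n) p := by linarith
        have hxyge : (ε / b) * dist (xs n) p ≤ dist (xs n) (T (ys n)) := by
          have h1 : (ε / b) * dist (xs n) p ≤ (ε / b) * b :=
            mul_le_mul_of_nonneg_left (hbound n) (le_of_lt (div_pos hε hb))
          rw [div_mul_cancel₀ _ hb.ne'] at h1
          linarith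
        have hgc := genConvex H hU rpos hεb p (xs n) (T (ys n))
          (le_refl _) (hTyp n) hxyge (hl n)
        rw [← hrec n] at hgc
        have hmo : η b (ε/b) ≤ η (dist (xs n) p) (ε/b) :=
          hmon (dist (xs n) p) b (ε/b) rpos (hbound n) hεb
        have hc0 : 0 ≤ l n * (1 - l n) := mul_nonneg (hl n).1 (by linarith [(hl n).2])
        nlinarith [hgc,
          mul_nonneg (mul_nonneg hc0 (sub_nonneg.mpr hmo)) rpos.le,
          mul_nonneg (mul_nonneg hc0 hη₀pos.le) (by linarith : (0:ℝ) ≤ 2 * dist (xs n) p - ε)]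
      -- k ≤ M
      have hK1 : 1 ≤ K := by
        rw [hKdef]
        exact Nat.one_le_ceil_iff.mpr (by positivity)
      have hθ1 : ((K + k : ℕ) : ℝ) ≤ ∑ i ∈ Finset.range (M + 1), l i * (1 - l i) := by
        rw [hMdef]; exact hθ (K + k)
      have hsum_le : ∀ m : ℕ, ∑ i ∈ Finset.range m, l i * (1 - l i) ≤ (m : ℝ) := by
        intro m
        calc ∑ i ∈ Finset.range m, l i * (1 - l i) ≤ ∑ i ∈ Finset.range m, (1:ℝ) :=
              Finset.sum_le_sum (fun i _ => by nlinarith [(hl i).1, (hl i).2])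
          _ = m := by simp
      have hKkM : K + k ≤ M + 1 := by
        have := (hθ1.trans (hsum_le (M+1)))
        exact_mod_cast this
      have hkM : k ≤ M := by omega
      -- telescoping
      have htel : ∑ j ∈ Finset.range (M + 1 - k),
          (l (k+j) * (1 - l (k+j)) * (η b (ε/b) * ε)) ≤ b := by
        calc ∑ j ∈ Finset.range (M + 1 - k), (l (k+j) * (1 - l (k+j)) * (η b (ε/b) * ε))
            ≤ ∑ j ∈ Finset.range (M + 1 - k),
              (dist (xs (k+j)) p - dist (xs (k+j+1)) p) := by
              apply Finset.sum_le_sum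
              intro j hj
              have hjm : j < M + 1 - k := Finset.mem_range.mp hj
              have := hstep (k+j) (Nat.le_add_right k j) (by omega)
              linarith
          _ = dist (xs (k+0)) p - dist (xs (k + (M+1-k))) p :=
              Finset.sum_range_sub' (fun j => dist (xs (k+j)) p) (M+1-k)
          _ ≤ b := by
              have h1 := hbound (k+0)
              have h2 : (0:ℝ) ≤ dist (xs (k + (M+1-k))) p := dist_nonneg
              linarith
      -- lower bound on the partial sum
      have hsplit : (∑ i ∈ Finset.range k, l i * (1 - l i)) +
          (∑ j ∈ Finset.range (M + 1 - k), l (k+j) * (1 - l (k+j))) =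
          ∑ i ∈ Finset.range (M + 1), l i * (1 - l i) := by
        rw [show M + 1 = k + (M + 1 - k) by omega,
          Finset.sum_range_add (fun i => l i * (1 - l i)) k (M + 1 - k),
          Nat.add_sub_cancel_left]
      have hlow : (b + 1) / (ε * η b (ε/b)) ≤
          ∑ j ∈ Finset.range (M + 1 - k), l (k+j) * (1 - l (k+j)) := by
        have h1 := hsum_le k
        have h2 : ((b + 1) / (ε * η b (ε/b)) : ℝ) ≤ (K : ℝ) := by
          rw [hKdef]; exact Nat.le_ceil _
        have h3 : ((K + k : ℕ) : ℝ) = (K : ℝ) + (k : ℝ) := by push_cast; ring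
        rw [h3] at hθ1
        linarith [hθ1, hsplit]
      -- contradiction
      have hfin : (b + 1) / (ε * η b (ε/b)) * (η b (ε/b) * ε) ≤ b := by
        calc (b + 1) / (ε * η b (ε/b)) * (η b (ε/b) * ε)
            ≤ (∑ j ∈ Finset.range (M + 1 - k), l (k+j) * (1 - l (k+j))) * (η b (ε/b) * ε) :=
              mul_le_mul_of_nonneg_right hlow (by positivity)
          _ = ∑ j ∈ Finset.range (M + 1 - k), (l (k+j) * (1 - l (k+j)) * (η b (ε/b) * ε)) :=
              by rw [Finset.sum_mul]
          _ ≤ b := htel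
      have heq : (b + 1) / (ε * η b (ε/b)) * (η b (ε/b) * ε) = b + 1 := by
        rw [mul_comm (η b (ε/b)) ε]
        exact div_mul_cancel₀ _ (by positivity)
      rw [heq] at hfin
      linarith
    · -- trivial case ε > 2b
      refine ⟨k, le_refl k, ?_, ?_⟩
      · rw [hRate, if_neg hcase]
      · push_neg at hcase
        exact lt_of_le_of_lt (hub k) hcase
  refine ⟨main, ?_⟩
  -- liminf part
  have hbddBelow : Filter.IsBoundedUnder (· ≥ ·) Filter.atTop
      (fun n => dist (xs n) (T (ys n))) :=
    Filter.isBoundedUnder_of ⟨0, fun n => dist_nonneg⟩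
  have hbddAbove : Filter.IsBoundedUnder (· ≤ ·) Filter.atTop
      (fun n => dist (xs n) (T (ys n))) :=
    Filter.isBoundedUnder_of ⟨2*b, fun n => hub n⟩
  have hge0 : (0:ℝ) ≤ Filter.liminf (fun n => dist (xs n) (T (ys n))) Filter.atTop := by
    apply Filter.le_liminf_of_le hbddAbove.isCoboundedUnder_ge
    exact Filter.Eventually.of_forall (fun n => dist_nonneg)
  have hle : ∀ ε : ℝ, 0 < ε →
      Filter.liminf (fun n => dist (xs n) (T (ys n))) Filter.atTop ≤ ε := by
    intro ε hε
    apply Filter.liminf_le_of_frequently_le _ hbddBelow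
    rw [Filter.frequently_atTop]
    intro k
    obtain ⟨N, hkN, _, hN⟩ := main ε hε k
    exact ⟨N, hkN, hN.le⟩
  have hle0 : Filter.liminf (fun n => dist (xs n) (T (ys n))) Filter.atTop ≤ 0 := by
    apply le_of_forall_pos_le_add
    intro ε hε
    simpa using hle ε hε
  linarith
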